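/- arXiv:2601.00054 — 2 statements merged into one kernel-verified Lean document; each statement's English description precedes it below -/
import Mathlib

section
/- Let P ⊆ ℝ^n be a compact convex set with nonempty interior. For each positive integer m let N_m = #((m • P) ∩ ℤ^n). Then the rescaled average of lattice points of the dilates converges to the centroid of P: lim_{m→∞} (1/(m·N_m)) · Σ_{u ∈ (m • P) ∩ ℤ^n} u = b(P), where b(P) = (1/vol(P)) ∫_P x dx ∈ ℝ^n is the centroid (barycenter) of P with respect to Lebesgue measure. -/
open MeasureTheory Filter Topology Pointwise

/-- The set of lattice points of the `m`-th dilate of `P ⊆ ℝⁿ`, viewed as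
integer vectors `u ∈ ℤⁿ` whose real image lies in `m • P`. -/
def latticePointsOfDilate (n : ℕ) (P : Set (Fin n → ℝ)) (m : ℕ) : Set (Fin n → ℤ) :=
  {u : Fin n → ℤ | (fun i => (u i : ℝ)) ∈ (m : ℝ) • P}

/-- The centroid (barycenter) of a set `P ⊆ ℝⁿ` with respect to Lebesgue measure:
`b(P) = (1 / vol P) ∫_P x dx`. -/
noncomputable def centroid (n : ℕ) (P : Set (Fin n → ℝ)) : Fin n → ℝ :=
  ((volume P).toReal)⁻¹ • ∫ x in P, x

namespace AvgLatticeAux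

open BoxIntegral BoxIntegral.unitPartition

variable {d : ℕ} {P : Set (Fin d → ℝ)}

lemma lattice_finite (hP : Bornology.IsBounded P) (m : ℕ) :
    (latticePointsOfDilate d P m).Finite := by
  have hbd : Bornology.IsBounded ((m : ℝ) • P) := hP.smul₀ _
  obtain ⟨R, hR⟩ := hbd.subset_closedBall 0
  refine Set.Finite.subset (Set.finite_Icc (fun _ => (-⌊R⌋ : ℤ)) fun _ => ⌊R⌋) ?_
  intro u hu
  have h1 : (fun i => (u i : ℝ)) ∈ Metric.closedBall (0 : Fin d → ℝ) R := hR hu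
  rw [Metric.mem_closedBall, dist_zero_right] at h1
  have h2 : ∀ i, |(u i : ℝ)| ≤ R := by
    intro i
    calc |(u i : ℝ)| = ‖(fun i => (u i : ℝ)) i‖ := rfl
    _ ≤ ‖fun i => (u i : ℝ)‖ := norm_le_pi_norm (fun i => (u i : ℝ)) i
    _ ≤ R := h1
  have h3 : ∀ i, |u i| ≤ ⌊R⌋ := by
    intro i
    refine Int.le_floor.mpr ?_
    have := h2 i
    push_cast
    exact this
  constructor <;> intro i
  · exact (abs_le.mp (h3 i)).1
  · exact (abs_le.mp (h3 i)).2

lemma mem_lattice_iff {m : ℕ} (hm : m ≠ 0) (u : Fin d → ℤ) :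
    u ∈ latticePointsOfDilate d P m ↔ (fun i => (u i : ℝ) / m) ∈ P := by
  have hm' : (m : ℝ) ≠ 0 := Nat.cast_ne_zero.mpr hm
  rw [latticePointsOfDilate, Set.mem_setOf_eq,
    Set.mem_smul_set_iff_inv_smul_mem₀ hm']
  constructor
  · intro h
    convert h using 1
    funext i
    simp [div_eq_inv_mul]
  · intro h
    convert h using 1
    funext i
    simp [div_eq_inv_mul]

/-- The integral sum of the indicator of `P` over the unit prepartition equals the
rescaled sum over lattice points of the dilate. -/
lemma integralSum_eq (f : (Fin d → ℝ) → ℝ) (m : ℕ) [NeZero m] {B : Box (Fin d)}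
    (hB : BoxIntegral.hasIntegralVertices B) (hPB : P ≤ ↑B)
    (hfin : (latticePointsOfDilate d P m).Finite) :
    BoxIntegral.integralSum (P.indicator f) (volume : Measure (Fin d → ℝ)).toBoxAdditive.toSMul
        (prepartition m B)
      = ((m : ℝ) ^ d)⁻¹ * ∑ u ∈ hfin.toFinset, f (fun i => (u i : ℝ) / m) := by
  classical
  have hm : m ≠ 0 := NeZero.ne m
  have hm' : (m : ℝ) ≠ 0 := Nat.cast_ne_zero.mpr hm
  have hboxes : (prepartition m B).boxes
      = Finset.image (fun ν => box m ν) (admissibleIndex m B) := rfl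
  rw [BoxIntegral.integralSum, hboxes,
    Finset.sum_image (fun x _ y _ h => box_injective m h)]
  have hterm : ∀ ν ∈ admissibleIndex m B,
      (volume : Measure (Fin d → ℝ)).toBoxAdditive.toSMul (box m ν)
        (P.indicator f ((prepartition m B).tag (box m ν)))
      = ((m : ℝ) ^ d)⁻¹ * P.indicator f (tag m ν) := by
    intro ν hν
    rw [prepartition_tag m hν]
    simp only [BoxAdditiveMap.toSMul_apply, Measure.toBoxAdditive_apply, smul_eq_mul]
    congr 1
    rw [measureReal_def, volume_box]
    simp [ENNReal.toReal_div, Fintype.card_fin]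
  rw [Finset.sum_congr rfl hterm, ← Finset.mul_sum]
  congr 1
  -- now: ∑ ν in admissibleIndex, indicator = ∑ u in lattice points, f (u/m)
  rw [show (fun ν => P.indicator f (tag m ν))
      = fun ν => if tag m ν ∈ P then f (tag m ν) else 0 from rfl]
  rw [Finset.sum_ite, Finset.sum_const_zero, add_zero]
  refine Finset.sum_bij' (fun ν _ => ν + 1) (fun u _ => u - 1) ?_ ?_ ?_ ?_ ?_
  · intro ν hν
    rw [Finset.mem_filter] at hν
    rw [Set.Finite.mem_toFinset, mem_lattice_iff hm]
    convert hν.2 using 1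
    funext i
    push_cast [Pi.add_apply, Pi.one_apply]
    rw [tag_apply]
  · intro u hu
    rw [Set.Finite.mem_toFinset, mem_lattice_iff hm] at hu
    have htag : tag m (u - 1) = fun i => (u i : ℝ) / m := by
      funext i
      rw [tag_apply]
      push_cast [Pi.sub_apply, Pi.one_apply]
      ring_nf
    rw [Finset.mem_filter]
    refine ⟨?_, by rw [htag]; exact hu⟩
    have := mem_admissibleIndex_of_mem_box m hB (hPB (htag ▸ hu : tag m (u - 1) ∈ P))
    rwa [index_tag] at this
  · intro ν _; simp
  · intro u _; simp
  · intro ν hν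
    rw [Finset.mem_filter] at hν
    congr 1
    funext i
    rw [tag_apply]
    push_cast [Pi.add_apply, Pi.one_apply]
    ring

/-- Key Riemann-sum convergence: for a continuous `f`, the rescaled sums of `f` over the
lattice points of the dilates converge to `∫_P f`. -/
lemma tendsto_sum_div_pow (hPcomp : IsCompact P) (hPconv : Convex ℝ P)
    (f : (Fin d → ℝ) → ℝ) (hf : Continuous f) :
    Tendsto (fun m : ℕ => ((m : ℝ) ^ d)⁻¹ *
        ∑ᶠ u ∈ latticePointsOfDilate d P m, f (fun i => (u i : ℝ) / m))
      atTop (𝓝 (∫ x in P, f x)) := by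
  classical
  obtain ⟨B, hB, hPB⟩ := BoxIntegral.le_hasIntegralVertices_of_isBounded hPcomp.isBounded
  have hPmeas : MeasurableSet P := hPcomp.isClosed.measurableSet
  set g : (Fin d → ℝ) → ℝ := P.indicator f with hg
  -- boundedness of g on the box
  obtain ⟨C, hC⟩ := (B.isCompact_Icc).exists_bound_of_continuousOn hf.continuousOn
  have hbound : ∃ C : ℝ, ∀ x ∈ Box.Icc B, ‖g x‖ ≤ C :=
    ⟨C, fun x hx => le_trans (norm_indicator_le_norm_self f x) (hC x hx)⟩
  -- a.e. continuity of g
  have haec : ∀ᵐ x ∂(volume : Measure (Fin d → ℝ)), ContinuousAt g x := by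
    have hfr : (volume : Measure (Fin d → ℝ)) (frontier P) = 0 :=
      hPconv.addHaar_frontier volume
    filter_upwards [compl_mem_ae_iff.mpr hfr] with x hx
    have hx' : x ∈ interior P ∨ x ∉ closure P := by
      by_contra h
      push_neg at h
      exact hx ⟨h.2, h.1⟩
    rcases hx' with hx' | hx'
    · refine hf.continuousAt.congr ?_
      filter_upwards [isOpen_interior.mem_nhds hx'] with y hy
      exact (Set.indicator_of_mem (interior_subset hy) f).symm
    · refine continuousAt_const.congr (f := fun _ => (0 : ℝ)) ?_
      filter_upwards [isClosed_closure.isOpen_compl.mem_nhds hx'] with y hy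
      exact (Set.indicator_of_notMem (fun hyP => hy (subset_closure hyP)) f).symm
  -- Box integrability w.r.t. the Riemann filter
  have hint : BoxIntegral.HasIntegral B .Riemann g
      (volume : Measure (Fin d → ℝ)).toBoxAdditive.toSMul (∫ x in P, f x) := by
    have h := MeasureTheory.AEContinuous.hasBoxIntegral (f := g)
      (volume : Measure (Fin d → ℝ)) hbound haec .Riemann
    have heq : ∫ x in (B : Set (Fin d → ℝ)), g x = ∫ x in P, f x := by
      rw [hg, setIntegral_indicator hPmeas, Set.inter_eq_self_of_subset_right hPB]
    rwa [heq] at h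
  -- finiteness of the lattice point sets
  have hfin : ∀ m : ℕ, (latticePointsOfDilate d P m).Finite :=
    lattice_finite hPcomp.isBounded
  rw [Metric.tendsto_atTop]
  intro ε hε
  obtain ⟨r, hr₁, hr₂⟩ := BoxIntegral.hasIntegral_iff.mp hint (ε / 2) (by positivity)
  set ρ : ℝ := (r 1 0 : ℝ) with hρdef
  have hρ : 0 < ρ := (r 1 0).2
  refine ⟨max 1 ⌈1 / ρ⌉₊, fun m hm => ?_⟩
  have hm1 : 1 ≤ m := le_trans (le_max_left _ _) hm
  haveI : NeZero m := ⟨by omega⟩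
  have hmpos : (0 : ℝ) < m := by exact_mod_cast hm1
  have h1m : 1 / (m : ℝ) ≤ ρ := by
    rw [div_le_iff₀ hmpos]
    have h1 : 1 / ρ ≤ (⌈1 / ρ⌉₊ : ℝ) := Nat.le_ceil _
    have h2 : (⌈1 / ρ⌉₊ : ℝ) ≤ (m : ℝ) := by
      exact_mod_cast le_trans (le_max_right _ _) hm
    have h3 : (1 : ℝ) ≤ (m : ℝ) * ρ := (div_le_iff₀ hρ).mp (le_trans h1 h2)
    linarith
  have hrconst : r 1 = fun _ => r 1 0 := funext (hr₁ 1 rfl)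
  have hmem : IntegrationParams.MemBaseSet .Riemann B 1 (r 1) (prepartition m B) := by
    constructor
    · rw [hrconst]
      exact prepartition_isSubordinate m B hρ h1m
    · intro _; exact prepartition_isHenstock m B
    · intro h; simp [IntegrationParams.Riemann] at h
    · intro h; simp [IntegrationParams.Riemann] at h
  have hpart : (prepartition m B).IsPartition := prepartition_isPartition m hB
  have hdist := hr₂ 1 (prepartition m B) hmem hpart
  rw [integralSum_eq f m hB hPB (hfin m)] at hdist
  have hsum : ∑ᶠ u ∈ latticePointsOfDilate d P m, f (fun i => (u i : ℝ) / m)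
      = ∑ u ∈ (hfin m).toFinset, f (fun i => (u i : ℝ) / m) :=
    finsum_mem_eq_finite_toFinset_sum _ (hfin m)
  rw [hsum]
  exact lt_of_le_of_lt hdist (by linarith)

end AvgLatticeAux

/-- **Averages of lattice points of dilates converge to the centroid.**
If `P ⊆ ℝⁿ` is a compact convex set with nonempty interior and
`N_m = #((m • P) ∩ ℤⁿ)`, then `(1/(m·N_m)) Σ_{u ∈ (m•P) ∩ ℤⁿ} u → b(P)`,
the centroid of `P`. -/
theorem average_lattice_points_tendsto_centroid (n : ℕ) (P : Set (Fin n → ℝ))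
    (hPcomp : IsCompact P) (hPconv : Convex ℝ P) (hPint : (interior P).Nonempty) :
    Tendsto
      (fun m : ℕ =>
        ((m : ℝ) * ((latticePointsOfDilate n P m).ncard : ℝ))⁻¹ •
          ∑ᶠ u ∈ latticePointsOfDilate n P m, (fun i => (u i : ℝ) : Fin n → ℝ))
      atTop (𝓝 (centroid n P)) := by
  classical
  have hfin : ∀ m : ℕ, (latticePointsOfDilate n P m).Finite :=
    AvgLatticeAux.lattice_finite hPcomp.isBounded
  have hPmeas : MeasurableSet P := hPcomp.isClosed.measurableSet
  have hvol_pos : 0 < (volume P).toReal := by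
    refine ENNReal.toReal_pos ?_ hPcomp.measure_lt_top.ne
    refine fun h => absurd (measure_mono_null interior_subset h) ?_
    exact (isOpen_interior.measure_pos volume hPint).ne'
  have hid_int : IntegrableOn (fun x : Fin n → ℝ => x) P volume :=
    ContinuousOn.integrableOn_compact hPcomp continuousOn_id
  rw [tendsto_pi_nhds]
  intro i
  -- the two scalar limits
  have h1 : Tendsto (fun m : ℕ => ((m : ℝ) ^ n)⁻¹ *
      ∑ᶠ u ∈ latticePointsOfDilate n P m, (1 : ℝ)) atTop (𝓝 ((volume P).toReal)) := by
    have := AvgLatticeAux.tendsto_sum_div_pow hPcomp hPconv (fun _ => (1 : ℝ))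
      continuous_const
    simpa [measureReal_def] using this
  have h2 : Tendsto (fun m : ℕ => ((m : ℝ) ^ n)⁻¹ *
      ∑ᶠ u ∈ latticePointsOfDilate n P m, ((u i : ℝ) / m)) atTop
      (𝓝 (∫ x in P, x i)) := by
    have := AvgLatticeAux.tendsto_sum_div_pow hPcomp hPconv (fun x => x i)
      (continuous_apply i)
    simpa using this
  have hdiv := h2.div h1 hvol_pos.ne'
  have hcent : (∫ x in P, x i) / (volume P).toReal = centroid n P i := by
    rw [centroid, Pi.smul_apply, smul_eq_mul, ← inv_mul_eq_div]
    congr 1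
    have := (ContinuousLinearMap.proj (R := ℝ) (φ := fun _ : Fin n => ℝ)
      i).integral_comp_comm hid_int
    simp only [ContinuousLinearMap.proj_apply] at this
    exact this
  rw [hcent] at hdiv
  refine hdiv.congr' ?_
  filter_upwards [eventually_ge_atTop 1] with m hm
  have hm0 : (m : ℝ) ≠ 0 := by positivity
  set T : Finset (Fin n → ℤ) := (hfin m).toFinset with hT
  have hS1 : ∑ᶠ u ∈ latticePointsOfDilate n P m, (1 : ℝ)
      = (T.card : ℝ) := by
    rw [finsum_mem_eq_finite_toFinset_sum _ (hfin m)]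
    simp [hT]
  have hS2 : ∑ᶠ u ∈ latticePointsOfDilate n P m, ((u i : ℝ) / m)
      = (∑ u ∈ T, (u i : ℝ)) / m := by
    rw [finsum_mem_eq_finite_toFinset_sum _ (hfin m), ← hT, Finset.sum_div]
  have hSvec : (∑ᶠ u ∈ latticePointsOfDilate n P m, (fun j => (u j : ℝ) : Fin n → ℝ)) i
      = ∑ u ∈ T, (u i : ℝ) := by
    rw [finsum_mem_eq_finite_toFinset_sum _ (hfin m), ← hT, Finset.sum_apply]
  have hcard : ((latticePointsOfDilate n P m).ncard : ℝ) = (T.card : ℝ) := by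
    rw [Set.ncard_eq_toFinset_card _ (hfin m)]
  simp only [Pi.div_apply]
  rw [hS1, hS2, Pi.smul_apply, smul_eq_mul, hSvec, hcard]
  rcases eq_or_ne (T.card : ℝ) 0 with hN | hN
  · have hTempty : T = ∅ := by
      rw [← Finset.card_eq_zero]
      exact_mod_cast hN
    simp [hN, hTempty]
  · have hmn : ((m : ℝ) ^ n) ≠ 0 := pow_ne_zero _ hm0
    field_simp
end

section
/- Let P ⊆ ℝ^n be a compact convex set with nonempty interior, let N_m = #((m • P) ∩ ℤ^n), and let ℓ : ℝ^n → ℝ be a linear map. Then lim_{m→∞} (1/(m·N_m)) · Σ_{u ∈ (m • P) ∩ ℤ^n} ℓ(u) = ℓ(b(P)), where b(P) = (1/vol(P)) ∫_P x dx is the centroid of P. -/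
open MeasureTheory Filter Topology Pointwise

open BoxIntegral BoxIntegral.unitPartition Classical in
/-- The lattice points of the `m`-th dilate, described via the unit partition indices. -/
theorem latticePoints_eq_coe {n : ℕ} [NeZero n] {P : Set (Fin n → ℝ)} {B : Box (Fin n)}
    (hB : BoxIntegral.hasIntegralVertices B) (hPB : P ⊆ ↑B) (m : ℕ) [NeZero m] :
    latticePointsOfDilate n P m =
      ↑((((admissibleIndex m B).filter (fun ν => tag m ν ∈ P))).image
        (fun ν => ν + (1 : Fin n → ℤ))) := by
  classical
  have hm0 : ((m : ℝ)) ≠ 0 := Nat.cast_ne_zero.mpr (NeZero.ne m)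
  ext u
  simp only [latticePointsOfDilate, Set.mem_setOf_eq, Finset.coe_image, Set.mem_image,
    Finset.mem_coe, Finset.mem_filter]
  constructor
  · intro hu
    obtain ⟨x, hxP, hxu⟩ := hu
    have hx' : x = fun i => (u i : ℝ) / m := by
      funext i
      have h := congrFun hxu i
      simp only [Pi.smul_apply, smul_eq_mul] at h
      exact (eq_div_iff hm0).mpr (by rw [mul_comm]; exact h)
    refine ⟨u - 1, ⟨?_, ?_⟩, by ring⟩
    · have hxB : x ∈ B := hPB hxP
      have h := mem_admissibleIndex_of_mem_box m hB hxB
      have hidx : index m x = u - 1 := by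
        funext i
        simp only [index_apply, hx']
        rw [mul_div_cancel₀ _ hm0, Int.ceil_intCast]
        simp
      rwa [hidx] at h
    · have htag : tag m (u - 1) = x := by
        funext i
        simp only [tag_apply, hx', Pi.sub_apply, Pi.one_apply]
        push_cast
        ring
      rwa [htag]
  · rintro ⟨ν, ⟨hadm, htag⟩, rfl⟩
    refine ⟨tag m ν, htag, ?_⟩
    funext i
    simp only [Pi.smul_apply, smul_eq_mul, tag_apply, Pi.add_apply, Pi.one_apply]
    push_cast
    field_simp

open BoxIntegral BoxIntegral.unitPartition Classical in
/-- The Riemann integral sum of an indicator function over the unit partition. -/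
theorem integralSum_indicator_eq {n : ℕ} [NeZero n] (P : Set (Fin n → ℝ)) (B : Box (Fin n))
    (f : (Fin n → ℝ) → ℝ) (m : ℕ) [NeZero m] :
    BoxIntegral.integralSum (P.indicator f) volume.toBoxAdditive.toSMul (prepartition m B) =
      (∑ ν ∈ (admissibleIndex m B).filter (fun ν => tag m ν ∈ P), f (tag m ν)) / (m : ℝ) ^ n := by
  classical
  have hboxes : (prepartition m B).boxes =
      (admissibleIndex m B).image (fun ν => box m ν) := by
    refine Finset.ext fun I => ?_
    rw [Finset.mem_image]
    exact mem_prepartition_boxes_iff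
  rw [BoxIntegral.integralSum, hboxes,
    Finset.sum_image (fun a _ b _ h => box_injective m h)]
  have hterm : ∀ ν ∈ admissibleIndex m B,
      volume.toBoxAdditive.toSMul (box m ν)
        (P.indicator f ((prepartition m B).tag (box m ν)))
        = P.indicator f (tag m ν) / (m : ℝ) ^ n := by
    intro ν hν
    rw [prepartition_tag m hν]
    simp only [BoxAdditiveMap.toSMul_apply, Measure.toBoxAdditive_apply, volume_box,
      Fintype.card_fin, smul_eq_mul]
    simp only [measureReal_def, volume_box, Fintype.card_fin]
    rw [ENNReal.toReal_div, ENNReal.toReal_one, ENNReal.toReal_pow, ENNReal.toReal_natCast,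
      one_div, inv_mul_eq_div]
  rw [Finset.sum_congr rfl hterm, ← Finset.sum_div]
  congr 1
  rw [Finset.sum_indicator_eq_sum_filter]

open BoxIntegral BoxIntegral.unitPartition Classical in
/-- The lattice points of a dilate of a compact set form a finite set. -/
theorem latticePoints_finite {n : ℕ} [NeZero n] {P : Set (Fin n → ℝ)} (hPcomp : IsCompact P)
    {m : ℕ} (hm : 1 ≤ m) : (latticePointsOfDilate n P m).Finite := by
  obtain ⟨B, hB, hPB⟩ := BoxIntegral.le_hasIntegralVertices_of_isBounded hPcomp.isBounded
  haveI : NeZero m := ⟨Nat.one_le_iff_ne_zero.mp hm⟩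
  rw [latticePoints_eq_coe hB hPB m]
  exact Finset.finite_toSet _

set_option maxHeartbeats 1000000 in
open BoxIntegral BoxIntegral.unitPartition Classical in
/-- Riemann sums over lattice points of dilates converge to the integral. -/
theorem tendsto_riemann_sum {n : ℕ} [NeZero n] {P : Set (Fin n → ℝ)}
    (hPcomp : IsCompact P) (hPconv : Convex ℝ P) {f : (Fin n → ℝ) → ℝ} (hf : Continuous f) :
    Tendsto (fun m : ℕ =>
        (∑ᶠ u ∈ latticePointsOfDilate n P m, f (fun i => (u i : ℝ) / m)) / (m : ℝ) ^ n)
      atTop (𝓝 (∫ x in P, f x)) := by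
  classical
  obtain ⟨B, hB, hPB⟩ := BoxIntegral.le_hasIntegralVertices_of_isBounded hPcomp.isBounded
  have hmeasP : MeasurableSet P := hPcomp.isClosed.measurableSet
  obtain ⟨C, hC⟩ := B.isCompact_Icc.exists_bound_of_continuousOn hf.continuousOn
  have hbd : ∃ C, ∀ x ∈ Box.Icc B, ‖P.indicator f x‖ ≤ C :=
    ⟨C, fun x hx => le_trans (norm_indicator_le_norm_self f x) (hC x hx)⟩
  have hae : ∀ᵐ x, ContinuousAt (P.indicator f) x := by
    filter_upwards [compl_mem_ae_iff.mpr (hPconv.addHaar_frontier volume)] with x hx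
    by_cases hxi : x ∈ interior P
    · refine hf.continuousAt.congr ?_
      filter_upwards [isOpen_interior.mem_nhds hxi] with y hy
      exact (Set.indicator_of_mem (interior_subset hy) f).symm
    · have hxc : x ∉ closure P := fun hc => hx ⟨hc, hxi⟩
      refine continuousAt_const.congr (f := fun _ => (0 : ℝ)) ?_
      filter_upwards [(isOpen_compl_iff.mpr isClosed_closure).mem_nhds hxc] with y hy
      exact (Set.indicator_of_notMem (fun h => hy (subset_closure h)) f).symm
  have hInt := MeasureTheory.AEContinuous.hasBoxIntegral (E := ℝ) (I := B) volume hbd hae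
    IntegrationParams.Riemann
  have hIB : (∫ x in B, P.indicator f x) = ∫ x in P, f x := by
    rw [setIntegral_indicator hmeasP, Set.inter_eq_self_of_subset_right hPB]
  rw [Metric.tendsto_atTop]
  intro ε hε
  obtain ⟨r, hr, H⟩ := BoxIntegral.hasIntegral_iff.mp hInt (ε / 2) (half_pos hε)
  have hRiemann : IntegrationParams.Riemann.bRiemann = true := rfl
  set r₀ : Set.Ioi (0 : ℝ) := r 1 0 with hr₀
  have hr₀pos : (0 : ℝ) < r₀ := r₀.2
  obtain ⟨N, hN⟩ := exists_nat_ge (1 / (r₀ : ℝ))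
  refine ⟨max N 1, fun m hm => ?_⟩
  have hm1 : 1 ≤ m := le_trans (le_max_right N 1) hm
  haveI : NeZero m := ⟨Nat.one_le_iff_ne_zero.mp hm1⟩
  have hmpos : (0 : ℝ) < m := Nat.cast_pos.mpr hm1
  have hsub : 1 / (m : ℝ) ≤ r₀ := by
    have h1 : (N : ℝ) ≤ m := Nat.cast_le.mpr (le_trans (le_max_left N 1) hm)
    exact (one_div_le hmpos hr₀pos).mpr (le_trans hN h1)
  have hrconst : (fun _ : Fin n → ℝ => r₀) = r 1 := funext fun x => (hr 1 hRiemann x).symm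
  have hmem : IntegrationParams.Riemann.MemBaseSet B 1 (r 1) (prepartition m B) := by
    refine ⟨?_, fun _ => prepartition_isHenstock m B,
      fun h => absurd h (by decide), fun h => absurd h (by decide)⟩
    rw [← hrconst]
    exact prepartition_isSubordinate m B hr₀pos hsub
  have hdist := H 1 _ hmem (prepartition_isPartition m hB)
  have hsum : (∑ᶠ u ∈ latticePointsOfDilate n P m, f fun i => (u i : ℝ) / m)
      = ∑ ν ∈ (admissibleIndex m B).filter (fun ν => tag m ν ∈ P), f (tag m ν) := by
    rw [latticePoints_eq_coe hB hPB m, finsum_mem_coe_finset,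
      Finset.sum_image (fun a _ b _ h => add_left_injective _ h)]
    refine Finset.sum_congr rfl fun ν _ => ?_
    congr 1
    funext i
    simp only [Pi.add_apply, Pi.one_apply, tag_apply]
    push_cast
    ring
  rw [hsum, ← hIB]
  calc dist ((∑ ν ∈ (admissibleIndex m B).filter (fun ν => tag m ν ∈ P), f (tag m ν)) / (m : ℝ) ^ n)
        (∫ x in B, P.indicator f x)
      = dist (BoxIntegral.integralSum (P.indicator f) volume.toBoxAdditive.toSMul
          (prepartition m B)) (∫ x in B, P.indicator f x) := by
        rw [integralSum_indicator_eq]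
    _ ≤ ε / 2 := hdist
    _ < ε := half_lt_self hε

/-- **Averages of a linear functional over lattice points of dilates.**
If `P ⊆ ℝⁿ` is a compact convex set with nonempty interior,
`N_m = #((m • P) ∩ ℤⁿ)`, and `ℓ : ℝⁿ → ℝ` is linear, then
`(1/(m·N_m)) Σ_{u ∈ (m•P) ∩ ℤⁿ} ℓ(u) → ℓ(b(P))`, where `b(P)` is the centroid of `P`. -/
theorem average_linear_on_lattice_points_tendsto (n : ℕ) (P : Set (Fin n → ℝ))
    (hPcomp : IsCompact P) (hPconv : Convex ℝ P) (hPint : (interior P).Nonempty)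
    (ℓ : (Fin n → ℝ) →ₗ[ℝ] ℝ) :
    Tendsto
      (fun m : ℕ =>
        ((m : ℝ) * ((latticePointsOfDilate n P m).ncard : ℝ))⁻¹ *
          ∑ᶠ u ∈ latticePointsOfDilate n P m, ℓ (fun i => (u i : ℝ)))
      atTop (𝓝 (ℓ (centroid n P))) := by
  classical
  rcases Nat.eq_zero_or_pos n with rfl | hn
  · have hz : ∀ x : Fin 0 → ℝ, ℓ x = 0 := fun x => by
      rw [Subsingleton.elim x 0, map_zero]
    simp only [hz, finsum_zero, mul_zero]
    simpa using (tendsto_const_nhds : Tendsto (fun _ : ℕ => (0 : ℝ)) atTop (𝓝 0))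
  haveI : NeZero n := ⟨hn.ne'⟩
  have hvol_ne_top : volume P ≠ ⊤ := hPcomp.measure_lt_top.ne
  have hvol_pos : 0 < (volume P).toReal := by
    refine ENNReal.toReal_pos ?_ hvol_ne_top
    exact (lt_of_lt_of_le (isOpen_interior.measure_pos volume hPint)
      (measure_mono interior_subset)).ne'
  have A1 := tendsto_riemann_sum hPcomp hPconv (f := fun _ => (1 : ℝ)) continuous_const
  simp only [setIntegral_const, smul_eq_mul, mul_one] at A1
  have hℓc : Continuous ℓ := ℓ.continuous_of_finiteDimensional
  have A2 := tendsto_riemann_sum hPcomp hPconv (f := ⇑ℓ) hℓc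
  have hdiv := A2.div A1 hvol_pos.ne'
  have hintP : IntegrableOn (fun x : Fin n → ℝ => x) P volume :=
    continuous_id.continuousOn.integrableOn_compact hPcomp
  have hval : (∫ x in P, ℓ x) / (volume P).toReal = ℓ (centroid n P) := by
    rw [centroid, _root_.map_smul, smul_eq_mul, div_eq_inv_mul]
    congr 1
    have := ContinuousLinearMap.integral_comp_comm ℓ.toContinuousLinearMap hintP
      (μ := volume.restrict P)
    simpa using this
  rw [← hval]
  refine Tendsto.congr' ?_ hdiv
  rw [Filter.EventuallyEq, Filter.eventually_atTop]
  refine ⟨1, fun m hm => ?_⟩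
  haveI : NeZero m := ⟨Nat.one_le_iff_ne_zero.mp hm⟩
  have hm0 : ((m : ℝ)) ≠ 0 := Nat.cast_ne_zero.mpr (NeZero.ne m)
  have hfin := latticePoints_finite hPcomp hm
  simp only [Pi.div_apply]
  rw [← hfin.coe_toFinset, finsum_mem_coe_finset, finsum_mem_coe_finset, finsum_mem_coe_finset,
    Set.ncard_coe_finset]
  set S := hfin.toFinset with hS
  have hone : (∑ _u ∈ S, (1 : ℝ)) = (S.card : ℝ) := by
    rw [Finset.sum_const, nsmul_eq_mul, mul_one]
  have hscale : (∑ u ∈ S, ℓ fun i => (u i : ℝ) / m)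
      = (m : ℝ)⁻¹ * ∑ u ∈ S, ℓ (fun i => (u i : ℝ)) := by
    rw [Finset.mul_sum]
    refine Finset.sum_congr rfl fun u _ => ?_
    have h : (fun i => (u i : ℝ) / m) = (m : ℝ)⁻¹ • (fun i => (u i : ℝ)) := by
      funext i
      simp [div_eq_inv_mul]
    rw [h, LinearMap.map_smul, smul_eq_mul]
  rw [hone, hscale]
  set A := ∑ u ∈ S, ℓ (fun i => (u i : ℝ)) with hA
  set c := (S.card : ℝ) with hc
  rcases eq_or_ne c 0 with hc0 | hc0
  · simp [hc0]
  · have hmn : ((m : ℝ)) ^ n ≠ 0 := pow_ne_zero _ hm0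
    field_simp
end
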